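/- arXiv:1703.04773 — 3 statements merged into one kernel-verified Lean document; each statement's English description precedes it below -/
import Mathlib

section
/- The map P defined on entire functions by P(f)(z) = f(0)·f'(z) is not hypercyclic on H(ℂ): there is no entire function f such that for every entire function g and every ε > 0, R > 0 there exists n ∈ ℕ with sup_{|z| ≤ R} |P^n(f)(z) − g(z)| < ε. -/
open Metric Set

noncomputable def P (f : ℂ → ℂ) : ℂ → ℂ := fun z => f 0 * deriv f z

lemma diff_deriv {f : ℂ → ℂ} (hf : Differentiable ℂ f) : Differentiable ℂ (deriv f) := by
  rw [← differentiableOn_univ] at *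
  exact ((hf.analyticOnNhd isOpen_univ).deriv).differentiableOn

lemma diff_P {f : ℂ → ℂ} (hf : Differentiable ℂ f) : Differentiable ℂ (P f) :=
  (differentiable_const _).mul (diff_deriv hf)

lemma diff_iter {f : ℂ → ℂ} (hf : Differentiable ℂ f) (n : ℕ) : Differentiable ℂ (P^[n] f) := by
  induction n with
  | zero => simpa using hf
  | succ m ih => rw [Function.iterate_succ_apply']; exact diff_P ih

lemma cauchy_est {h : ℂ → ℂ} (hh : Differentiable ℂ h) {r s M : ℝ} (hs : 0 < s)
    (hM : ∀ w, ‖w‖ ≤ r + s → ‖h w‖ ≤ M) :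
    ∀ z, ‖z‖ ≤ r → ‖deriv h z‖ ≤ M / s := by
  intro z hz
  have := Complex.norm_deriv_le_of_forall_mem_sphere_norm_le (c := z) (R := s) (C := M) hs
    hh.diffContOnCl (fun w hw => hM w (by
      have : ‖w - z‖ = s := by simpa [Complex.dist_eq] using hw
      calc ‖w‖ = ‖w - z + z‖ := by ring_nf
        _ ≤ ‖w - z‖ + ‖z‖ := norm_add_le _ _
        _ ≤ s + r := by rw [this]; linarith
        _ = r + s := by ring))
  simpa using this

lemma decay {h : ℂ → ℂ} (hh : Differentiable ℂ h)
    (hb : ∀ z, ‖z‖ ≤ 2 → ‖h z‖ ≤ 1/16) :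
    ∀ m, ∀ z, ‖z‖ ≤ 1 + (1/2:ℝ)^m →
      ‖P^[m] h z‖ ≤ ((1/2:ℝ)^(m+1))^2 / 4 := by
  intro m
  induction m with
  | zero => intro z hz; norm_num at hz ⊢; exact hb z hz
  | succ m ih =>
    intro z hz
    set s : ℝ := (1/2:ℝ)^(m+1) with hsdef
    have hs : 0 < s := by positivity
    have hs1 : s ≤ 1 := by
      rw [hsdef]
      exact pow_le_one₀ (by norm_num) (by norm_num)
    set A : ℝ := s^2 / 4 with hA
    have hAnn : 0 ≤ A := by positivity
    have hiter : Differentiable ℂ (P^[m] h) := diff_iter hh m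
    have hsum : (1 + (1/2:ℝ)^(m+1)) + (1/2:ℝ)^(m+1) = 1 + (1/2:ℝ)^m := by
      rw [pow_succ]; ring
    have hder : ∀ w, ‖w‖ ≤ 1 + (1/2:ℝ)^(m+1) →
        ‖deriv (P^[m] h) w‖ ≤ A / s := by
      apply cauchy_est hiter hs
      intro w hw
      exact ih w (by rw [← hsum]; exact hw)
    have h0 : ‖(P^[m] h) 0‖ ≤ A := by
      apply ih
      simp
      positivity
    rw [Function.iterate_succ_apply']
    show ‖(P^[m] h) 0 * deriv (P^[m] h) z‖ ≤ ((1/2:ℝ)^(m+1+1))^2/4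
    rw [norm_mul]
    have hd := hder z hz
    have habs : ‖(P^[m] h) 0‖ * ‖deriv (P^[m] h) z‖ ≤ A * (A / s) := by
      apply mul_le_mul h0 hd (by positivity) hAnn
    refine habs.trans ?_
    have : ((1/2:ℝ)^(m+1+1))^2/4 = s^2/16 := by
      rw [hsdef, pow_succ]; ring
    rw [this, hA]
    have he : s^2/4 * (s^2/4/s) = s * s^2/16 := by field_simp; ring
    rw [he]
    nlinarith [sq_nonneg s]

/-- `P(f) = f(0)·f'` is not hypercyclic on the space of entire functions. -/
theorem P_not_hypercyclic :
    ¬ ∃ f : ℂ → ℂ, Differentiable ℂ f ∧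
      ∀ g : ℂ → ℂ, Differentiable ℂ g → ∀ ε > (0 : ℝ), ∀ R > (0 : ℝ),
        ∃ n : ℕ, ∀ z : ℂ, ‖z‖ ≤ R →
          ‖(P^[n] f) z - g z‖ < ε := by
  rintro ⟨f, hf, hdense⟩
  -- Step A: some iterate is ≤ 1/16 on the disk of radius 2, hence all later ones are small at 0
  obtain ⟨n₂, hn₂⟩ := hdense (fun _ => 0) (differentiable_const 0) (1/16) (by norm_num) 2
    (by norm_num)
  have hsmall : ∀ n, n₂ ≤ n → ‖(P^[n] f) 0‖ ≤ 1/16 := by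
    intro n hn
    obtain ⟨m, rfl⟩ : ∃ m, n = m + n₂ := ⟨n - n₂, by omega⟩
    have hd := decay (diff_iter hf n₂) (fun z hz => by
      have := hn₂ z hz; simpa using this.le) m 0 (by simp; positivity)
    rw [← Function.iterate_add_apply] at hd
    refine hd.trans ?_
    have h1 : ((1/2:ℝ)^(m+1))^2 ≤ 1/4 := by
      have : (1/2:ℝ)^(m+1) ≤ 1/2 := by
        calc (1/2:ℝ)^(m+1) ≤ (1/2:ℝ)^1 :=
          pow_le_pow_of_le_one (by norm_num) (by norm_num) (by omega)
        _ = 1/2 := by norm_num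
      nlinarith [pow_nonneg (by norm_num : (0:ℝ) ≤ 1/2) (m+1)]
    linarith
  -- Step B: choose a real constant c ∈ (3/2, 5/2) avoiding the finitely many orbit values at 0
  set V : Finset ℂ := (Finset.range n₂).image (fun i => (P^[i] f) 0) with hV
  have hinf : (Set.Ioo ((3:ℝ)/2) (5/2)).Infinite := Set.Ioo_infinite (by norm_num)
  have hinf2 : ((fun r : ℝ => (r:ℂ)) '' (Set.Ioo ((3:ℝ)/2) (5/2))).Infinite :=
    hinf.image (fun a _ b _ h => by exact_mod_cast h)
  obtain ⟨c, hcmem, hcV⟩ := hinf2.exists_notMem_finset V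
  obtain ⟨r, hr, rfl⟩ := hcmem
  -- the minimal distance δ
  set D : Finset ℝ := insert 1 ((Finset.range n₂).image
    (fun i => ‖(P^[i] f) 0 - (r:ℂ)‖)) with hD
  have hDne : D.Nonempty := ⟨1, Finset.mem_insert_self _ _⟩
  set δ : ℝ := D.min' hDne with hδ
  have hδ1 : δ ≤ 1 := Finset.min'_le _ _ (Finset.mem_insert_self _ _)
  have hδpos : 0 < δ := by
    apply (Finset.lt_min'_iff _ _).2
    intro y hy
    rcases Finset.mem_insert.1 hy with h | h
    · subst h; norm_num
    · obtain ⟨i, hi, rfl⟩ := Finset.mem_image.1 h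
      have hne : (P^[i] f) 0 ≠ (r:ℂ) := by
        intro he
        exact hcV (Finset.mem_image.2 ⟨i, hi, he⟩)
      have := sub_ne_zero_of_ne hne
      simpa [norm_pos_iff] using this
  -- apply density to the constant function c
  obtain ⟨n, hn⟩ := hdense (fun _ => (r:ℂ)) (differentiable_const _) δ hδpos 1 one_pos
  have h0 := hn 0 (by simp)
  rcases lt_or_ge n n₂ with hlt | hge
  · have : δ ≤ ‖(P^[n] f) 0 - (r:ℂ)‖ :=
      Finset.min'_le _ _ (Finset.mem_insert_of_mem
        (Finset.mem_image.2 ⟨n, Finset.mem_range.2 hlt, rfl⟩))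
    linarith
  · have h1 := hsmall n hge
    have h2 : (3:ℝ)/2 ≤ ‖(r:ℂ)‖ := by
      rw [Complex.norm_real, Real.norm_eq_abs]
      rw [abs_of_pos (by linarith [hr.1])]
      linarith [hr.1]
    have h3 : ‖(r:ℂ)‖ - ‖(P^[n] f) 0‖ ≤
        ‖(P^[n] f) 0 - (r:ℂ)‖ := by
      rw [norm_sub_rev]
      exact norm_sub_norm_le _ _
    linarith
end

section
/- Let P be the map on entire functions defined by P(f)(z) = f(0)·f'(z) and let X = {f entire : there exists R > 1 with limsup_n |c_n(f)|·(n!)²·R^n = ∞}, where c_n(f) = ∏_{j=0}^{n-1} (f^{(j)}(0))^{2^{n-1-j}}. Then X is P-invariant: if f ∈ X then P(f) ∈ X. -/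
open Filter

open scoped ContDiff

/-- `c_n(f) = ∏_{j=0}^{n-1} (f^{(j)}(0))^{2^{n-1-j}}`. -/
noncomputable def c (n : ℕ) (f : ℂ → ℂ) : ℂ :=
  ∏ j ∈ Finset.range n, (iteratedDeriv j f 0) ^ 2 ^ (n - 1 - j)

/-- Membership in `X`: there is `R > 1` with
`limsup_n |c_n(f)|·(n!)²·Rⁿ = ∞`. -/
noncomputable def memX (f : ℂ → ℂ) : Prop :=
  ∃ R : ℝ, 1 < R ∧ ∀ M : ℝ, ∃ᶠ n in atTop,
    M ≤ ‖c n f‖ * (n.factorial : ℝ) ^ 2 * R ^ n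

lemma key_identity (f : ℂ → ℂ) (hf : Differentiable ℂ f) (n : ℕ) :
    f 0 * c n (P f) = c (n + 1) f := by
  have hdf : ContDiff ℂ ∞ (deriv f) :=
    (contDiff_infty_iff_deriv.mp hf.contDiff).2
  have hP : ∀ j : ℕ, iteratedDeriv j (P f) 0 = f 0 * iteratedDeriv (j + 1) f 0 := by
    intro j
    have h1 : iteratedDeriv j (P f) 0 = f 0 * iteratedDeriv j (deriv f) 0 := by
      rw [show P f = fun z => f 0 * deriv f z from rfl, ← iteratedDerivWithin_univ,
        ← iteratedDerivWithin_univ]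
      exact iteratedDerivWithin_const_mul (Set.mem_univ 0) uniqueDiffOn_univ (f 0)
        ((hdf.of_le (by exact_mod_cast le_top)).contDiffWithinAt)
    rw [h1, iteratedDeriv_succ']
  have hL : f 0 * c n (P f) =
      (f 0) ^ (2 ^ n) *
        ∏ j ∈ Finset.range n, (iteratedDeriv (j + 1) f 0) ^ 2 ^ (n - 1 - j) := by
    unfold c
    simp only [hP, mul_pow]
    rw [Finset.prod_mul_distrib, Finset.prod_pow_eq_pow_sum, ← mul_assoc, ← pow_succ']
    congr 2
    have hs : ∑ j ∈ Finset.range n, 2 ^ (n - 1 - j) = ∑ j ∈ Finset.range n, 2 ^ j := by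
      rw [← Finset.sum_range_reflect (fun j => (2:ℕ) ^ j) n]
    rw [hs, Nat.geomSum_eq le_rfl n]
    have h1 : 1 ≤ 2 ^ n := Nat.one_le_two_pow
    omega
  have hR : c (n + 1) f =
      (∏ j ∈ Finset.range n, (iteratedDeriv (j + 1) f 0) ^ 2 ^ (n - 1 - j)) *
        (f 0) ^ (2 ^ n) := by
    unfold c
    rw [Finset.prod_range_succ']
    congr 1
    apply Finset.prod_congr rfl
    intro j hj
    congr 2 <;> omega
  rw [hL, hR, mul_comm]

/-- `X` is invariant under `P`. -/
theorem X_invariant (f : ℂ → ℂ) (hf : Differentiable ℂ f) (hfX : memX f) :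
    memX (P f) := by
  obtain ⟨R, hR1, hfreq⟩ := hfX
  have hR0 : (0:ℝ) < R := lt_trans one_pos hR1
  have hf0 : f 0 ≠ 0 := by
    intro h0
    have := (hfreq 1).and_eventually (eventually_ge_atTop 1)
    obtain ⟨n, hn, hn1⟩ := this.exists
    have hc0 : c n f = 0 := by
      unfold c
      apply Finset.prod_eq_zero (Finset.mem_range.mpr (by omega : 0 < n))
      simp [iteratedDeriv_zero, h0]
    rw [hc0] at hn
    simp at hn
    linarith
  set a : ℝ := ‖f 0‖ with ha_def
  have ha : 0 < a := by simpa [ha_def] using hf0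
  refine ⟨R ^ 3, one_lt_pow₀ hR1 (by norm_num), fun M => ?_⟩
  have habs : ∀ n : ℕ, ‖c n (P f)‖ = ‖c (n + 1) f‖ / a := by
    intro n
    rw [← key_identity f hf n, norm_mul]
    field_simp [ha_def]
    rw [ha_def]
  -- eventual growth
  have hgrow : ∀ᶠ m : ℕ in atTop, M * a * R ^ 3 * (m : ℝ) ^ 2 ≤ (R ^ 2) ^ m := by
    set K : ℝ := max (M * a * R ^ 3) 1 with hK_def
    have hKpos : 0 < K := lt_max_of_lt_right one_pos
    have hr : (0:ℝ) ≤ 1 / R ^ 2 := by positivity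
    have hr2 : 1 / R ^ 2 < 1 := by
      rw [div_lt_one (by positivity)]; nlinarith
    have htend := tendsto_pow_const_mul_const_pow_of_lt_one 2 hr hr2
    have hev := htend.eventually_le_const (show (0:ℝ) < 1 / K by positivity)
    filter_upwards [hev] with m hm
    have hpow : (0:ℝ) < (R ^ 2) ^ m := by positivity
    rw [div_pow, one_pow, mul_one_div, div_le_div_iff₀ hpow hKpos] at hm
    have hKle : M * a * R ^ 3 ≤ K := le_max_left _ _
    nlinarith [sq_nonneg (m:ℝ), hm, hKle]
  rw [frequently_atTop]
  intro N
  obtain ⟨m, hm1, hmS, hmgrow, hmN⟩ :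
      ∃ m : ℕ, 1 ≤ m ∧
        (1:ℝ) ≤ ‖c m f‖ * (m.factorial : ℝ) ^ 2 * R ^ m ∧
        M * a * R ^ 3 * (m : ℝ) ^ 2 ≤ (R ^ 2) ^ m ∧ N + 1 ≤ m := by
    obtain ⟨m, h1, h2, h3⟩ :=
      ((hfreq 1).and_eventually (hgrow.and (eventually_ge_atTop (N + 1)))).exists
    exact ⟨m, by omega, h1, h2, h3⟩
  refine ⟨m - 1, by omega, ?_⟩
  set n := m - 1 with hn_def
  have hmn : m = n + 1 := by omega
  rw [habs n, ← hmn]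
  set A : ℝ := ‖c m f‖ with hA_def
  have hAn : 1 / ((m.factorial : ℝ) ^ 2 * R ^ m) ≤ A := by
    rw [div_le_iff₀ (by positivity)]
    linarith [hmS]
  have hfac : ((m.factorial : ℝ)) ^ 2 = ((n.factorial : ℝ)) ^ 2 * ((m:ℝ)) ^ 2 := by
    rw [hmn, Nat.factorial_succ]
    push_cast
    ring
  have hmpos : (0:ℝ) < (m:ℝ) := by exact_mod_cast (by omega : 0 < m)
  have step0 : M ≤ (1 / ((m.factorial : ℝ) ^ 2 * R ^ m) / a) *
      (n.factorial : ℝ) ^ 2 * (R ^ 3) ^ n := by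
    have hrhs : (1 / ((m.factorial : ℝ) ^ 2 * R ^ m) / a) *
        (n.factorial : ℝ) ^ 2 * (R ^ 3) ^ n
        = R ^ (3 * n) / ((m:ℝ) ^ 2 * R ^ (n + 1) * a) := by
      rw [hfac, hmn, ← pow_mul]
      field_simp
    rw [hrhs, le_div_iff₀ (by positivity)]
    have h2m : (R ^ 2) ^ m = R ^ (2 * n + 2) := by
      rw [hmn, ← pow_mul]; ring_nf
    have h4 : M * a * R ^ 3 * (m:ℝ) ^ 2 * R ^ (n + 1) ≤ R ^ (2 * n + 2) * R ^ (n + 1) := by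
      apply mul_le_mul_of_nonneg_right _ (by positivity)
      rw [← h2m]; exact hmgrow
    have h5 : R ^ (2 * n + 2) * R ^ (n + 1) = R ^ (3 * n) * R ^ 3 := by
      rw [← pow_add, ← pow_add]; congr 1; omega
    rw [h5] at h4
    refine le_of_mul_le_mul_right ?_ (pow_pos hR0 3)
    calc M * ((m:ℝ) ^ 2 * R ^ (n + 1) * a) * R ^ 3
        = M * a * R ^ 3 * (m:ℝ) ^ 2 * R ^ (n + 1) := by ring
      _ ≤ R ^ (3 * n) * R ^ 3 := h4
  refine le_trans step0 ?_
  gcongr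
end

section
/- Let P be the map on entire functions defined by P(f)(z) = f(0)·f'(z) and let f be an entire function such that the sequence |c_n(f)|·(n!)² is bounded, where c_n(f) = ∏_{j=0}^{n-1} (f^{(j)}(0))^{2^{n-1-j}}. Then P^{n}(f)(0) → 0 as n → ∞; in particular the orbit of f under P is not dense in H(ℂ). -/
open Filter

lemma c_succ (n : ℕ) (f : ℂ → ℂ) :
    c (n + 1) f = (c n f) ^ 2 * iteratedDeriv n f 0 := by
  unfold c
  rw [Finset.prod_range_succ]
  have h1 : ∀ j ∈ Finset.range n,
      (iteratedDeriv j f 0) ^ 2 ^ (n + 1 - 1 - j) =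
      ((iteratedDeriv j f 0) ^ 2 ^ (n - 1 - j)) ^ 2 := by
    intro j hj
    rw [← pow_mul]
    congr 1
    have hjn : j < n := Finset.mem_range.mp hj
    have : n + 1 - 1 - j = (n - 1 - j) + 1 := by omega
    rw [this, pow_succ]
  rw [Finset.prod_congr rfl h1, ← Finset.prod_pow]
  simp [Nat.sub_sub]

lemma iter_P_eq (f : ℂ → ℂ) (hf : Differentiable ℂ f) (n : ℕ) :
    P^[n] f = fun z => c n f * iteratedDeriv n f z := by
  have hD : ∀ m, Differentiable ℂ (iteratedDeriv m f) := fun m =>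
    (hf.contDiff : ContDiff ℂ (m+1 : ℕ) f).differentiable_iteratedDeriv m
      (by exact_mod_cast Nat.lt_succ_self m)
  induction n with
  | zero => simp [c, iteratedDeriv_zero]
  | succ n ih =>
    rw [Function.iterate_succ_apply', ih]
    funext z
    show (c n f * iteratedDeriv n f 0) * deriv (fun z => c n f * iteratedDeriv n f z) z = _
    rw [deriv_const_mul _ ((hD n).differentiableAt), ← iteratedDeriv_succ, c_succ]
    ring

/-- If `|c_n(f)|·(n!)²` is bounded then `P^n(f)(0) → 0`, and in particular the
orbit of `f` under `P` is not dense in the space of entire functions. -/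
theorem bounded_c_implies_not_dense_orbit (f : ℂ → ℂ) (hf : Differentiable ℂ f)
    (L : ℝ) (hL : ∀ n : ℕ, ‖c n f‖ * (n.factorial : ℝ) ^ 2 ≤ L) :
    Tendsto (fun n : ℕ => (P^[n] f) 0) atTop (nhds 0) ∧
    ¬ ∀ g : ℂ → ℂ, Differentiable ℂ g → ∀ ε > (0 : ℝ), ∀ R > (0 : ℝ),
        ∃ n : ℕ, ∀ z : ℂ, ‖z‖ ≤ R →
          ‖(P^[n] f) z - g z‖ < ε := by
  -- power series of f at 0 with radius ∞
  have hball := hf.hasFPowerSeriesOnBall 0 (R := 2) (by norm_num)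
  set p := cauchyPowerSeries f 0 2 with hp
  have hrad : (2 : NNReal) < p.radius := by
    refine lt_of_lt_of_le ?_ hball.r_le
    exact lt_of_lt_of_le (by norm_num) le_rfl
  obtain ⟨C, hC0, hC⟩ := p.norm_mul_pow_le_of_lt_radius hrad
  -- bound on iterated derivatives
  have hderiv : ∀ n : ℕ, ‖iteratedDeriv n f 0‖ ≤ n.factorial * ‖p n‖ := by
    intro n
    have h1 := hball.factorial_smul (1 : ℂ) n
    have h2 : iteratedDeriv n f 0 = iteratedFDeriv ℂ n f 0 (fun _ => (1 : ℂ)) := by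
      rw [iteratedDeriv_eq_iteratedFDeriv]
    rw [h2, ← h1, ← Nat.cast_smul_eq_nsmul ℂ, norm_smul]
    simp only [Complex.norm_natCast]
    refine mul_le_mul_of_nonneg_left ?_ (Nat.cast_nonneg _)
    calc ‖p n (fun _ => (1 : ℂ))‖ ≤ ‖p n‖ * ∏ _i : Fin n, ‖(1 : ℂ)‖ :=
          (p n).le_opNorm _
      _ = ‖p n‖ := by simp
  have hL0 : (1 : ℝ) ≤ L := by
    have := hL 0
    simpa [c] using this
  -- main bound: ‖P^[n] f 0‖ ≤ L * C * (1/2)^n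
  have hbound : ∀ n : ℕ, ‖(P^[n] f) 0‖ ≤ L * C * (1/2 : ℝ) ^ n := by
    intro n
    rw [iter_P_eq f hf n]
    have hfact : (0 : ℝ) < n.factorial := by positivity
    have hc : ‖c n f‖ ≤ L / (n.factorial : ℝ) ^ 2 := by
      rw [le_div_iff₀ (by positivity)]
      simpa using hL n
    have hpn : ‖p n‖ ≤ C / 2 ^ n := by
      rw [le_div_iff₀ (by positivity)]
      exact_mod_cast hC n
    calc ‖c n f * iteratedDeriv n f 0‖ = ‖c n f‖ * ‖iteratedDeriv n f 0‖ := norm_mul _ _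
      _ ≤ (L / (n.factorial : ℝ) ^ 2) * (n.factorial * ‖p n‖) :=
          mul_le_mul hc (hderiv n) (norm_nonneg _) (by positivity)
      _ = (L / n.factorial) * ‖p n‖ := by field_simp
      _ ≤ L * (C / 2 ^ n) := by
          have h1 : (1:ℝ) ≤ (n.factorial:ℝ) := by
            exact_mod_cast Nat.one_le_iff_ne_zero.mpr n.factorial_ne_zero
          have h2 : L / n.factorial ≤ L := by
            rw [div_le_iff₀ hfact]; nlinarith
          exact mul_le_mul h2 hpn (norm_nonneg _) (by linarith)
      _ = L * C * (1/2 : ℝ) ^ n := by rw [div_pow, one_pow, div_eq_mul_inv, div_eq_mul_inv]; ring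
  have htend : Tendsto (fun n : ℕ => (P^[n] f) 0) atTop (nhds 0) := by
    apply squeeze_zero_norm hbound
    have : Tendsto (fun n : ℕ => (1/2 : ℝ) ^ n) atTop (nhds 0) :=
      tendsto_pow_atTop_nhds_zero_of_lt_one (by norm_num) (by norm_num)
    simpa using this.const_mul (L * C)
  refine ⟨htend, ?_⟩
  intro hdense
  -- choose N such that ‖P^[n] f 0‖ < 1/2 for n ≥ N
  have hsmall := (htend.eventually (Metric.ball_mem_nhds (0 : ℂ) (by norm_num : (0:ℝ) < 1/2)))
  obtain ⟨N, hN⟩ := hsmall.exists_forall_of_atTop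
  -- choose a real a bigger than everything
  set a : ℝ := 1 + ∑ n ∈ Finset.range N, ‖(P^[n] f) 0‖ with ha
  have ha1 : 1 ≤ a := le_add_of_nonneg_right (Finset.sum_nonneg fun _ _ => norm_nonneg _) |>.trans_eq ha.symm
  obtain ⟨n, hn⟩ := hdense (fun _ => (a : ℂ)) (differentiable_const _) (1/2) (by norm_num) 1 (by norm_num)
  have h0 := hn 0 (by simp)
  have haabs : ‖((a : ℂ))‖ = a := by
    exact Complex.norm_of_nonneg (by linarith)
  have hge : a - ‖(P^[n] f) 0‖ ≤ ‖(P^[n] f) 0 - (a : ℂ)‖ := by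
    calc a - ‖(P^[n] f) 0‖ = ‖(a : ℂ)‖ - ‖(P^[n] f) 0‖ := by
          rw [haabs]
      _ ≤ ‖(a : ℂ) - (P^[n] f) 0‖ := norm_sub_norm_le _ _
      _ = ‖(P^[n] f) 0 - (a : ℂ)‖ := norm_sub_rev _ _
  have hkey : (1/2 : ℝ) ≤ ‖(P^[n] f) 0 - (a : ℂ)‖ := by
    rcases lt_or_ge n N with hnN | hnN
    · have hterm : ‖(P^[n] f) 0‖ ≤ a - 1 := by
        rw [ha]
        have := Finset.single_le_sum (f := fun m => ‖(P^[m] f) 0‖)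
          (fun m _ => norm_nonneg _) (Finset.mem_range.mpr hnN)
        linarith
      linarith
    · have := hN n hnN
      rw [dist_zero_right] at this
      linarith
  linarith
end
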